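/- Let n ≥ 1, let v₀, …, v_n be n+1 affinely independent points of ℝⁿ, and let S = convexHull{v₀, …, v_n} be the n-simplex they span. Then for every affine map u : ℝⁿ → ℝ, the Lebesgue integral of u over S equals the volume of S times the arithmetic mean of its vertex values: ∫_S u dx = vol(S) · (1/(n+1)) · ∑_{i=0}^{n} u(vᵢ). In particular, taking u to be a linear shape function N_I of the simplex (the affine map equal to 1 at vertex v_I and 0 at the other vertices), one obtains ∫_S N_I dx = vol(S)/(n+1), which is the identity underlying the FCFV source-term vector (f_e)_I = s_e |Ω_e| / n_en for a cell-wise constant source s_e. -/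

import Mathlib

open MeasureTheory

noncomputable section

variable {n : ℕ}

/-- Auxiliary: for an affine basis `v` of `ℝⁿ` and a permutation-shift `k`, an affine map
sending `v i` to `v (i + k)`. -/
theorem exists_affineMap_vertex_shift
    (v : Fin (n + 1) → EuclideanSpace ℝ (Fin n))
    (hv : AffineIndependent ℝ v)
    (hspan : affineSpan ℝ (Set.range v) = ⊤) (k : Fin (n + 1)) :
    ∃ T : EuclideanSpace ℝ (Fin n) →ᵃ[ℝ] EuclideanSpace ℝ (Fin n),
      (∀ i, T (v i) = v (i + k)) ∧ ∃ L : EuclideanSpace ℝ (Fin n) ≃ₗ[ℝ] EuclideanSpace ℝ (Fin n),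
        T.linear = L.toLinearMap := by
  classical
  let b : AffineBasis (Fin (n + 1)) ℝ (EuclideanSpace ℝ (Fin n)) := ⟨v, hv, hspan⟩
  let bk : AffineBasis (Fin (n + 1)) ℝ (EuclideanSpace ℝ (Fin n)) :=
    b.reindex (Equiv.addRight k).symm
  have hbk : ∀ i, bk i = v (i + k) := by
    intro i
    simp [bk, AffineBasis.reindex_apply, b]
    rfl
  let L : EuclideanSpace ℝ (Fin n) ≃ₗ[ℝ] EuclideanSpace ℝ (Fin n) :=
    (b.basisOf 0).equiv (bk.basisOf 0) (Equiv.refl _)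
  refine ⟨AffineMap.mk' (fun x => v (0 + k) + L (x - v 0)) L.toLinearMap (v 0) ?_, ?_, L, rfl⟩
  · intro p
    simp only [LinearEquiv.coe_coe, vsub_eq_sub, vadd_eq_add, sub_self, map_zero, add_zero]
    abel
  · intro i
    rcases eq_or_ne i 0 with rfl | hi
    · simp
    · have h1 : v i - v 0 = b.basisOf 0 ⟨i, hi⟩ := by
        rw [AffineBasis.basisOf_apply]; rfl
      have h2 : L (b.basisOf 0 ⟨i, hi⟩) = bk.basisOf 0 ⟨i, hi⟩ := by
        simpa using Module.Basis.equiv_apply (b.basisOf 0) ⟨i, hi⟩ (bk.basisOf 0) (Equiv.refl _)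
      simp only [AffineMap.coe_mk', h1, h2]
      rw [AffineBasis.basisOf_apply]
      have h3 : bk ((⟨i, hi⟩ : {j : Fin (n+1) // j ≠ 0}) : Fin (n+1)) = v (i + k) := hbk i
      have h4 : bk (0 : Fin (n+1)) = v (0 + k) := hbk 0
      rw [vsub_eq_sub, h3, h4]
      abel

end

/-- The Lebesgue integral of an affine map over a nondegenerate `n`-simplex of
`ℝⁿ` equals the volume of the simplex times the arithmetic mean of its vertex
values. -/
theorem integral_affineMap_fullSimplex_eq_volume_mul_mean
    (n : ℕ) (hn : 1 ≤ n)
    (v : Fin (n + 1) → EuclideanSpace ℝ (Fin n))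
    (hv : AffineIndependent ℝ v)
    (u : EuclideanSpace ℝ (Fin n) →ᵃ[ℝ] ℝ) :
    ∫ x in convexHull ℝ (Set.range v), u x =
      (volume (convexHull ℝ (Set.range v))).toReal *
        ((1 / (n + 1 : ℝ)) * ∑ i, u (v i)) := by
  classical
  set S := convexHull ℝ (Set.range v) with hSdef
  have hspan : affineSpan ℝ (Set.range v) = ⊤ := by
    rw [hv.affineSpan_eq_top_iff_card_eq_finrank_add_one]
    simp
  have hScompact : IsCompact S := (Set.finite_range v).isCompact_convexHull (𝕜 := ℝ)
  have hSmeas : MeasurableSet S := hScompact.measurableSet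
  have hSpos : volume S ≠ 0 :=
    (Measure.measure_pos_of_nonempty_interior _
      (interior_convexHull_nonempty_iff_affineSpan_eq_top.2 hspan)).ne'
  have hSfin : volume S ≠ ⊤ := hScompact.measure_lt_top.ne
  have hucont : Continuous u := by
    rw [u.decomp]
    exact u.linear.continuous_of_finiteDimensional.add continuous_const
  choose T hT hL using fun k => exists_affineMap_vertex_shift v hv hspan k
  choose L hTL using hL
  -- the underlying function of `T k`
  have hfun : ∀ k, ⇑(T k) = fun x =>
      (T k (v 0) - L k (v 0)) + L k x := by
    intro k
    funext x
    have := (T k).map_vadd (v 0) (x - v 0)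
    simp only [vadd_eq_add, sub_add_cancel, hTL k, LinearEquiv.coe_coe] at this
    rw [this, map_sub]
    abel
  -- `T k` maps the simplex onto itself
  have himg : ∀ k, ⇑(T k) '' S = S := by
    intro k
    rw [hSdef, AffineMap.image_convexHull, ← Set.range_comp]
    congr 1
    have h : ⇑(T k) ∘ v = v ∘ (Equiv.addRight k) := funext fun i => hT k i
    rw [h, Set.range_comp, (Equiv.addRight k).surjective.range_eq, Set.image_univ]
  -- determinant has absolute value 1
  have hdet : ∀ k, |LinearMap.det ((L k).toLinearMap)| = 1 := by
    intro k
    have h1 : volume (⇑(L k).toLinearMap '' S)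
        = ENNReal.ofReal |LinearMap.det (L k).toLinearMap| * volume S :=
      Measure.addHaar_image_linearMap volume _ _
    have h2 : ⇑(T k) '' S
        = ((T k (v 0) - L k (v 0)) + ·) '' (⇑(L k).toLinearMap '' S) := by
      rw [← Set.image_comp]
      exact Set.image_congr' (fun x => congrFun (hfun k) x)
    have h3 : volume S = ENNReal.ofReal |LinearMap.det (L k).toLinearMap| * volume S := by
      conv_lhs => rw [← himg k, h2, Set.image_add_left, measure_preimage_add]
      exact h1
    have h4 : |LinearMap.det (L k).toLinearMap| * (volume S).toReal = (volume S).toReal := by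
      have := congrArg ENNReal.toReal h3
      rw [ENNReal.toReal_mul, ENNReal.toReal_ofReal (abs_nonneg _)] at this
      linarith [this]
    have h5 : (volume S).toReal ≠ 0 := by
      simp [ENNReal.toReal_eq_zero_iff, hSpos, hSfin]
    exact mul_right_cancel₀ h5 (h4.trans (one_mul _).symm)
  -- change of variables: the integral is invariant under each `T k`
  have hint : ∀ k, ∫ x in S, u x = ∫ x in S, u (T k x) := by
    intro k
    have hfd : ∀ x ∈ S, HasFDerivWithinAt (T k)
        (LinearMap.toContinuousLinearMap (L k).toLinearMap) S x := by
      intro x _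
      have : HasFDerivAt (T k) (LinearMap.toContinuousLinearMap (L k).toLinearMap) x := by
        rw [hfun k]
        exact ((LinearMap.toContinuousLinearMap (L k).toLinearMap).hasFDerivAt).const_add _
      exact this.hasFDerivWithinAt
    have hinj : Set.InjOn (T k) S := by
      intro a _ b _ hab
      rw [hfun k] at hab
      simp only at hab
      have := add_left_cancel hab
      exact (L k).injective this
    conv_lhs => rw [← himg k]
    rw [integral_image_eq_integral_abs_det_fderiv_smul volume hSmeas hfd hinj u]
    refine setIntegral_congr_fun hSmeas fun x _ => ?_
    have : (LinearMap.toContinuousLinearMap (L k).toLinearMap).det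
        = LinearMap.det (L k).toLinearMap := by
      simp [ContinuousLinearMap.det]
    rw [this, hdet k]
    simp
  -- pointwise: summing over shifts gives a constant
  have hsum : ∀ x, ∑ k : Fin (n + 1), u (T k x) = ∑ j, u (v j) := by
    intro x
    let b : AffineBasis (Fin (n + 1)) ℝ (EuclideanSpace ℝ (Fin n)) := ⟨v, hv, hspan⟩
    have hw : ∑ i, b.coord i x = 1 := b.sum_coord_apply_eq_one x
    have hx : Finset.univ.affineCombination ℝ v (fun i => b.coord i x) = x :=
      b.affineCombination_coord_eq_self x
    have step : ∀ k, u (T k x) = ∑ i, b.coord i x * u (v (i + k)) := by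
      intro k
      conv_lhs => rw [← hx]
      rw [Finset.map_affineCombination _ v _ hw (T k),
        Finset.map_affineCombination _ _ _ hw u]
      have hcomp : ⇑u ∘ (⇑(T k) ∘ v) = fun i => u (v (i + k)) :=
        funext fun i => by simp [hT k i]
      rw [hcomp, Finset.univ.affineCombination_eq_linear_combination _ _ hw]
      simp [mul_comm]
    calc ∑ k : Fin (n + 1), u (T k x)
        = ∑ k : Fin (n + 1), ∑ i, b.coord i x * u (v (i + k)) := by
          exact Finset.sum_congr rfl fun k _ => step k
      _ = ∑ i, ∑ k : Fin (n + 1), b.coord i x * u (v (i + k)) := Finset.sum_comm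
      _ = ∑ i, b.coord i x * ∑ j, u (v j) := by
          refine Finset.sum_congr rfl fun i _ => ?_
          rw [← Finset.mul_sum]
          congr 1
          exact Fintype.sum_equiv (Equiv.addLeft i) _ _ fun k => by simp [add_comm]
      _ = ∑ j, u (v j) := by rw [← Finset.sum_mul, hw, one_mul]
  -- integrability
  have hintg : ∀ k, IntegrableOn (fun x => u (T k x)) S volume := by
    intro k
    have : Continuous fun x => u (T k x) := by
      rw [hfun k]
      exact hucont.comp ((continuous_const.add
        ((L k).toLinearMap.continuous_of_finiteDimensional)))
    exact this.continuousOn.integrableOn_compact hScompact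
  -- put everything together
  have hmain : (n + 1 : ℝ) * ∫ x in S, u x = (volume S).toReal * ∑ j, u (v j) := by
    have h1 : ∑ k : Fin (n + 1), ∫ x in S, u (T k x)
        = ∫ x in S, ∑ k : Fin (n + 1), u (T k x) :=
      (integral_finset_sum _ fun k _ => hintg k).symm
    have h2 : ∑ k : Fin (n + 1), ∫ x in S, u (T k x)
        = (n + 1 : ℝ) * ∫ x in S, u x := by
      simp [← hint, Finset.sum_const, nsmul_eq_mul]
    rw [← h2, h1]
    have h3 : ∫ x in S, ∑ k : Fin (n + 1), u (T k x)
        = ∫ x in S, (∑ j, u (v j) : ℝ) := by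
      exact setIntegral_congr_fun hSmeas fun x _ => hsum x
    rw [h3, setIntegral_const, smul_eq_mul]; rfl
  have hne : (n + 1 : ℝ) ≠ 0 := by positivity
  field_simp at hmain ⊢
  linarith [hmain]
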